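/- Let k ≥ 7 be an integer, θ = 2π/k, γ ∈ [0, (π - 3θ)/2). Let p, q be distinct points in the plane and suppose q lies in a cone C_p with apex p of angular width θ (the region between two rays from p at angle θ apart). Let r ∈ C_p be a point such that the signed distance from p to the sweeping line through r (the line at angle γ to the perpendicular of the cone's bisector) is at most the corresponding distance for q. Then |rq| ≤ |pq| - (cos(θ/2 + γ) - sin θ)·|pr|. -/

import Mathlib

open Real

set_option maxHeartbeats 1000000 in
private lemma key_trig (θ γ a b u v δ : ℝ) (hθ0 : 0 < θ) (hγ0 : 0 ≤ γ)
    (h3 : θ / 2 + γ + θ < π / 2)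
    (ha : 0 < a) (hb : 0 < b) (hu : |u| ≤ θ / 2 + γ) (hv : |v| ≤ θ / 2 + γ)
    (hδeq : δ = v - u) (hδ : |δ| ≤ θ)
    (hcl : a * Real.cos u ≤ b * Real.cos v) :
    Real.sqrt ((a - b * Real.cos δ) ^ 2 + (b * Real.sin δ) ^ 2)
      ≤ b - (Real.cos (θ / 2 + γ) - Real.sin θ) * a := by
  have hπ : (0:ℝ) < π := Real.pi_pos
  set m := θ / 2 + γ with hm
  clear_value m
  set c := Real.cos m - Real.sin θ with hc
  clear_value c
  have hm0 : 0 ≤ m := by rw [hm]; positivity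
  have hmπ2 : m < π / 2 := by linarith
  have hθπ2 : θ < π / 2 := by linarith
  have hs0 : 0 ≤ Real.sin θ := Real.sin_nonneg_of_nonneg_of_le_pi hθ0.le (by linarith)
  have hxs : Real.sin θ < Real.cos m := by
    have h1 : Real.cos (π / 2 - θ) < Real.cos m :=
      Real.cos_lt_cos_of_nonneg_of_le_pi hm0 (by linarith) (by linarith)
    rwa [Real.cos_pi_div_two_sub] at h1
  have hx0 : 0 < Real.cos m := lt_of_le_of_lt hs0 hxs
  have hc0 : 0 < c := by rw [hc]; linarith
  have hc1 : c ≤ 1 := by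
    have := Real.cos_le_one m
    rw [hc]; linarith
  have hcu : Real.cos m ≤ Real.cos u := by
    rw [← Real.cos_abs u]
    exact Real.cos_le_cos_of_nonneg_of_le_pi (abs_nonneg u) (by linarith) hu
  have hcv : Real.cos m ≤ Real.cos v := by
    rw [← Real.cos_abs v]
    exact Real.cos_le_cos_of_nonneg_of_le_pi (abs_nonneg v) (by linarith) hv
  have hcu1 : Real.cos u ≤ 1 := Real.cos_le_one u
  have hcv1 : Real.cos v ≤ 1 := Real.cos_le_one v
  have hcv0 : 0 < Real.cos v := lt_of_lt_of_le hx0 hcv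
  have hcu0 : 0 < Real.cos u := lt_of_lt_of_le hx0 hcu
  have hsinδ : |Real.sin δ| ≤ Real.sin θ := by
    have h1 : Real.sin |δ| ≤ Real.sin θ :=
      Real.sin_le_sin_of_le_of_le_pi_div_two
        (by linarith [abs_nonneg δ] : -(π / 2) ≤ |δ|) hθπ2.le hδ
    have h2 : |Real.sin δ| = Real.sin |δ| := by
      rcases abs_cases δ with ⟨h, hd⟩ | ⟨h, hd⟩
      · rw [h, abs_of_nonneg (Real.sin_nonneg_of_nonneg_of_le_pi hd
          (by linarith [abs_le.mp hδ]))]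
      · rw [h, Real.sin_neg, abs_of_nonpos]
        exact Real.sin_nonpos_of_nonpos_of_neg_pi_le hd.le (by linarith [abs_le.mp hδ])
    rw [h2]; exact h1
  have hcosδ : Real.cos θ ≤ Real.cos δ := by
    rw [← Real.cos_abs δ]
    exact Real.cos_le_cos_of_nonneg_of_le_pi (abs_nonneg δ) (by linarith) hδ
  have hcosθ0 : 0 ≤ Real.cos θ := Real.cos_nonneg_of_mem_Icc ⟨by linarith, hθπ2.le⟩
  have hcθ : 1 - Real.sin θ ≤ Real.cos θ := by
    nlinarith [Real.sin_sq_add_cos_sq θ, Real.sin_le_one θ, Real.cos_le_one θ]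
  have hc_le : c ≤ Real.cos δ := by
    have := Real.cos_le_one m
    rw [hc]; linarith
  have hstar : Real.sin θ ≤ Real.cos u - c * Real.cos v := by
    nlinarith [mul_le_mul_of_nonneg_left hcv1 hc0.le]
  have hGcv : 0 ≤ Real.cos v *
      (2 * Real.cos u * (Real.cos δ - c) - (1 - c ^ 2) * Real.cos v) := by
    have hid : Real.cos v *
        (2 * Real.cos u * (Real.cos δ - c) - (1 - c ^ 2) * Real.cos v)
        = (Real.cos u - c * Real.cos v) ^ 2 - Real.sin δ ^ 2 := by
      rw [hδeq, Real.cos_sub, Real.sin_sub]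
      linear_combination (Real.cos v ^ 2) * Real.sin_sq_add_cos_sq u +
        (Real.cos u ^ 2) * Real.sin_sq_add_cos_sq v
    have h4 : |Real.sin δ| ≤ Real.cos u - c * Real.cos v := hsinδ.trans hstar
    have h5 : Real.sin δ ^ 2 ≤ (Real.cos u - c * Real.cos v) ^ 2 := by
      rw [← sq_abs (Real.sin δ)]
      exact pow_le_pow_left₀ (abs_nonneg _) h4 2
    rw [hid]
    linarith
  have hG : (1 - c ^ 2) * Real.cos v ≤ 2 * Real.cos u * (Real.cos δ - c) := by
    have h := nonneg_of_mul_nonneg_right hGcv hcv0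
    linarith
  have hmain2 : a * (1 - c ^ 2) ≤ 2 * b * (Real.cos δ - c) := by
    have h1 : a * ((1 - c ^ 2) * Real.cos v) ≤ a * (2 * Real.cos u * (Real.cos δ - c)) :=
      mul_le_mul_of_nonneg_left hG ha.le
    have h2 : (a * Real.cos u) * (2 * (Real.cos δ - c)) ≤
        (b * Real.cos v) * (2 * (Real.cos δ - c)) := by
      apply mul_le_mul_of_nonneg_right hcl
      nlinarith [hc_le]
    have h3' : a * (1 - c ^ 2) * Real.cos v ≤ 2 * b * (Real.cos δ - c) * Real.cos v := by
      linarith [h1, h2]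
    exact le_of_mul_le_mul_right (by linarith [h3']) hcv0
  have hRHS0 : 0 ≤ b - c * a := by
    nlinarith [mul_le_mul_of_nonneg_right hcv1 hb.le, mul_le_mul_of_nonneg_left hcu ha.le]
  have hsq : (a - b * Real.cos δ) ^ 2 + (b * Real.sin δ) ^ 2 ≤ (b - c * a) ^ 2 := by
    have htrig : (b * Real.sin δ) ^ 2 + (b * Real.cos δ) ^ 2 = b ^ 2 := by
      linear_combination b ^ 2 * Real.sin_sq_add_cos_sq δ
    nlinarith [mul_le_mul_of_nonneg_left hmain2 ha.le, htrig]
  calc Real.sqrt ((a - b * Real.cos δ) ^ 2 + (b * Real.sin δ) ^ 2)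
      ≤ Real.sqrt ((b - c * a) ^ 2) := Real.sqrt_le_sqrt hsq
    _ = b - c * a := Real.sqrt_sq hRHS0

/-- Main geometric lemma (Lemma 7). The plane is modeled as `ℂ`; the cone with apex `p`,
bisector direction at angle `φ`, and aperture `θ` consists of points
`p + t * exp(ψ * I)` with `t > 0` and `|ψ - φ| ≤ θ/2`. The sweeping line through a point
`x` is perpendicular to the direction `exp((φ + γ) * I)`, so `x` is at least as close to
`p` as `y` (in sweeping-line order) iff `⟪x - p, exp((φ+γ)I)⟫ ≤ ⟪y - p, exp((φ+γ)I)⟫`. -/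
theorem stmt_11 (k : ℤ) (hk : 7 ≤ k) (θ γ φ : ℝ) (hθ : θ = 2 * π / k)
    (hγ0 : 0 ≤ γ) (hγ1 : γ < (π - 3 * θ) / 2)
    (p q r : ℂ) (hpq : p ≠ q)
    (hq : ∃ t ψ : ℝ, 0 < t ∧ |ψ - φ| ≤ θ / 2 ∧ q = p + t * Complex.exp (ψ * Complex.I))
    (hr : ∃ t ψ : ℝ, 0 < t ∧ |ψ - φ| ≤ θ / 2 ∧ r = p + t * Complex.exp (ψ * Complex.I))
    (hclose : ((r - p) * (starRingEnd ℂ) (Complex.exp ((φ + γ) * Complex.I))).re ≤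
      ((q - p) * (starRingEnd ℂ) (Complex.exp ((φ + γ) * Complex.I))).re) :
    dist r q ≤ dist p q - (Real.cos (θ / 2 + γ) - Real.sin θ) * dist p r := by
  obtain ⟨b, β, hb, hβ, hqe⟩ := hq
  obtain ⟨a, α, ha, hα, hre⟩ := hr
  have hπ : (0:ℝ) < π := Real.pi_pos
  have hk0 : (0:ℝ) < (k:ℝ) := by exact_mod_cast (by linarith : (0:ℤ) < k)
  have hθ0 : 0 < θ := by rw [hθ]; positivity
  have h3 : θ / 2 + γ + θ < π / 2 := by linarith
  have habs : ∀ (t ψ : ℝ), 0 < t →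
      ‖(t:ℂ) * Complex.exp ((ψ:ℝ) * Complex.I)‖ = t := by
    intro t ψ ht
    rw [norm_mul, Complex.norm_exp_ofReal_mul_I, mul_one, Complex.norm_real, Real.norm_eq_abs, abs_of_pos ht]
  have hdpq : dist p q = b := by
    rw [dist_comm, Complex.dist_eq, hqe, add_sub_cancel_left, habs b β hb]
  have hdpr : dist p r = a := by
    rw [dist_comm, Complex.dist_eq, hre, add_sub_cancel_left, habs a α ha]
  have hproj : ∀ (t ψ : ℝ),
      (((t:ℂ) * Complex.exp ((ψ:ℝ) * Complex.I)) *
        (starRingEnd ℂ) (Complex.exp ((↑φ + ↑γ) * Complex.I))).re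
        = t * Real.cos (ψ - (φ + γ)) := by
    intro t ψ
    have h1 : (starRingEnd ℂ) (Complex.exp ((↑φ + ↑γ) * Complex.I))
        = Complex.exp (-(↑φ + ↑γ) * Complex.I) := by
      rw [← Complex.exp_conj]
      congr 1
      simp only [map_mul, map_add, Complex.conj_ofReal, Complex.conj_I]
      ring
    rw [h1, mul_assoc, ← Complex.exp_add,
      show (ψ:ℂ) * Complex.I + -(↑φ + ↑γ) * Complex.I = ((ψ - (φ + γ) : ℝ) : ℂ) * Complex.I by
        push_cast; ring,
      Complex.re_ofReal_mul, Complex.exp_ofReal_mul_I_re]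
  have hclose' : a * Real.cos (α - (φ + γ)) ≤ b * Real.cos (β - (φ + γ)) := by
    rw [hqe, hre] at hclose
    simp only [add_sub_cancel_left] at hclose
    rwa [hproj a α, hproj b β] at hclose
  have hdrq : dist r q = Real.sqrt ((a - b * Real.cos (β - α)) ^ 2
      + (b * Real.sin (β - α)) ^ 2) := by
    have e2 : Complex.exp ((α:ℝ) * Complex.I) * Complex.exp (((β - α : ℝ)) * Complex.I)
        = Complex.exp ((β:ℝ) * Complex.I) := by
      rw [← Complex.exp_add]; congr 1; push_cast; ring
    have e1 : r - q = Complex.exp ((α:ℝ) * Complex.I) *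
        ((a:ℂ) - (b:ℂ) * Complex.exp (((β - α : ℝ)) * Complex.I)) := by
      rw [hre, hqe]; linear_combination (b:ℂ) * e2
    have hre' : ((a:ℂ) - (b:ℂ) * Complex.exp (((β - α : ℝ)) * Complex.I)).re
        = a - b * Real.cos (β - α) := by
      simp only [Complex.sub_re, Complex.ofReal_re, Complex.re_ofReal_mul,
        Complex.exp_ofReal_mul_I_re]
    have him' : ((a:ℂ) - (b:ℂ) * Complex.exp (((β - α : ℝ)) * Complex.I)).im
        = -(b * Real.sin (β - α)) := by
      simp only [Complex.sub_im, Complex.ofReal_im, Complex.im_ofReal_mul,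
        Complex.exp_ofReal_mul_I_im]
      ring
    rw [Complex.dist_eq, e1, norm_mul, Complex.norm_exp_ofReal_mul_I, one_mul,
      Complex.norm_def, Complex.normSq_apply, hre', him']
    congr 1
    ring
  rw [hdpq, hdpr, hdrq]
  have hu : |α - (φ + γ)| ≤ θ / 2 + γ := by
    rcases abs_le.mp hα with ⟨h1, h2⟩
    exact abs_le.mpr ⟨by linarith, by linarith⟩
  have hv : |β - (φ + γ)| ≤ θ / 2 + γ := by
    rcases abs_le.mp hβ with ⟨h1, h2⟩
    exact abs_le.mpr ⟨by linarith, by linarith⟩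
  have hδ : |β - α| ≤ θ := by
    rcases abs_le.mp hα with ⟨h1, h2⟩
    rcases abs_le.mp hβ with ⟨h3, h4⟩
    exact abs_le.mpr ⟨by linarith, by linarith⟩
  exact key_trig θ γ a b (α - (φ + γ)) (β - (φ + γ)) (β - α) hθ0 hγ0 h3 ha hb hu hv
    (by ring) hδ hclose'
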